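/- RMoP optimality for average occupancy in the LRUSM: let q_1 = 1 < q_2 < ... < q_l = V be the values k for which ev_k is a supported efficient point (Pareto-convex policy) in the (occupancy, miss-rate) cost plane, and let q_i < C' ≤ q_{i+1} with C' = γ'q_i + (1-γ')q_{i+1} for some γ' ∈ (0,1]. Then the randomized mixture that, for each item independently per lifetime, applies ev_{q_i} with probability γ' and ev_{q_{i+1}} with probability 1-γ' achieves average occupancy C' and miss rate γ'·(1-S(q_i))/V·V + (1-γ')·(1-S(q_{i+1})), which is the minimum miss rate among all policies with average occupancy C'. In particular, if s is monotonically decreasing then l = V and q_i = i, while if s is monotonically increasing then l = 2, q_1 = 1, q_2 = V. -/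

import Mathlib

/-- Cumulative stack-depth distribution `S(j) = ∑_{i=1}^j s i`. -/
noncomputable def cumS (s : ℕ → ℝ) (j : ℕ) : ℝ :=
  ∑ i ∈ Finset.Icc 1 j, s i

/-- `k` is a supported efficient point (Pareto-convex policy): no convex combination
of the single-item cost points `(j/V, (1-S(j))/V)` of the policies `ev_j` strictly
dominates the cost point `(k/V, (1-S(k))/V)` of `ev_k`. -/
def IsSEP (V : ℕ) (S : ℕ → ℝ) (k : ℕ) : Prop :=
  k ∈ Finset.Icc 1 V ∧
  ∀ w : ℕ → ℝ, (∀ j, 0 ≤ w j) → (∑ j ∈ Finset.Icc 1 V, w j) = 1 →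
    (∑ j ∈ Finset.Icc 1 V, w j * ((j : ℝ) / V)) ≤ (k : ℝ) / V →
    (∑ j ∈ Finset.Icc 1 V, w j * ((1 - S j) / V)) ≤ (1 - S k) / V →
    (∑ j ∈ Finset.Icc 1 V, w j * ((j : ℝ) / V)) = (k : ℝ) / V ∧
    (∑ j ∈ Finset.Icc 1 V, w j * ((1 - S j) / V)) = (1 - S k) / V

lemma cumS_eq (s : ℕ → ℝ) (j : ℕ) : cumS s j = ∑ i ∈ Finset.Ioc 0 j, s i := by
  rw [cumS, ← Finset.Icc_add_one_left_eq_Ioc, zero_add]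

lemma cumS_diff (s : ℕ → ℝ) {a b : ℕ} (hab : a ≤ b) :
    cumS s b - cumS s a = ∑ i ∈ Finset.Ioc a b, s i := by
  rw [cumS_eq, cumS_eq, ← Finset.sum_Ioc_consecutive _ (Nat.zero_le a) hab]
  ring

lemma sum_Ioc_le (s : ℕ → ℝ) (a b : ℕ) (c : ℝ) (h : ∀ t, a < t → t ≤ b → s t ≤ c) :
    ∑ t ∈ Finset.Ioc a b, s t ≤ ((b - a : ℕ) : ℝ) * c := by
  have := Finset.sum_le_card_nsmul (Finset.Ioc a b) s c
    (fun t ht => h t (Finset.mem_Ioc.mp ht).1 (Finset.mem_Ioc.mp ht).2)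
  rwa [Nat.card_Ioc, nsmul_eq_mul] at this

lemma le_sum_Ioc (s : ℕ → ℝ) (a b : ℕ) (c : ℝ) (h : ∀ t, a < t → t ≤ b → c ≤ s t) :
    ((b - a : ℕ) : ℝ) * c ≤ ∑ t ∈ Finset.Ioc a b, s t := by
  have := Finset.card_nsmul_le_sum (Finset.Ioc a b) s c
    (fun t ht => h t (Finset.mem_Ioc.mp ht).1 (Finset.mem_Ioc.mp ht).2)
  rwa [Nat.card_Ioc, nsmul_eq_mul] at this

lemma one_point (V k : ℕ) (hk : k ∈ Finset.Icc 1 V) (f : ℕ → ℝ) :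
    ∑ j ∈ Finset.Icc 1 V, (if j = k then (1:ℝ) else 0) * f j = f k := by
  simp [ite_mul, Finset.sum_ite_eq', hk]

lemma two_point (V p r : ℕ) (hp : p ∈ Finset.Icc 1 V) (hr : r ∈ Finset.Icc 1 V)
    (hpr : p ≠ r) (t u : ℝ) (f : ℕ → ℝ) :
    ∑ j ∈ Finset.Icc 1 V, (if j = p then t else if j = r then u else 0) * f j
      = t * f p + u * f r := by
  have h : ∀ j, (if j = p then t else if j = r then u else 0) * f j
      = (if j = p then t * f j else 0) + (if j = r then u * f j else 0) := by
    intro j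
    by_cases h1 : j = p <;> by_cases h2 : j = r <;> simp_all
  rw [Finset.sum_congr rfl (fun j _ => h j), Finset.sum_add_distrib,
    Finset.sum_ite_eq', Finset.sum_ite_eq']
  simp [hp, hr]

lemma sum_div_eq (V : ℕ) (w f : ℕ → ℝ) :
    ∑ j ∈ Finset.Icc 1 V, w j * (f j / V) = (∑ j ∈ Finset.Icc 1 V, w j * f j) / V := by
  rw [Finset.sum_div]
  exact Finset.sum_congr rfl fun j _ => (mul_div_assoc _ _ _).symm

lemma sum_affine (V : ℕ) (w : ℕ → ℝ) (hw1 : ∑ j ∈ Finset.Icc 1 V, w j = 1) (c m : ℝ) :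
    ∑ j ∈ Finset.Icc 1 V, w j * (c + m * (j:ℝ))
      = c + m * ∑ j ∈ Finset.Icc 1 V, w j * (j:ℝ) := by
  have h : ∀ j ∈ Finset.Icc 1 V, w j * (c + m * (j:ℝ)) = c * w j + m * (w j * (j:ℝ)) :=
    fun j _ => by ring
  rw [Finset.sum_congr rfl h, Finset.sum_add_distrib, ← Finset.mul_sum, ← Finset.mul_sum,
    hw1, mul_one]

section SEPlemmas
variable {V k : ℕ} {S : ℕ → ℝ}

lemma sep_apply (hV : 0 < V) (h : IsSEP V S k)
    (w : ℕ → ℝ) (hw0 : ∀ j, 0 ≤ w j) (hw1 : ∑ j ∈ Finset.Icc 1 V, w j = 1)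
    (hx : ∑ j ∈ Finset.Icc 1 V, w j * (j : ℝ) ≤ (k : ℝ))
    (hy : ∑ j ∈ Finset.Icc 1 V, w j * (1 - S j) ≤ 1 - S k) :
    (∑ j ∈ Finset.Icc 1 V, w j * (j : ℝ)) = (k : ℝ) ∧
    (∑ j ∈ Finset.Icc 1 V, w j * (1 - S j)) = 1 - S k := by
  have hV' : (0:ℝ) < V := by exact_mod_cast hV
  have e1 := sum_div_eq V w (fun j => (j : ℝ))
  have e2 := sum_div_eq V w (fun j => 1 - S j)
  obtain ⟨h1, h2⟩ := h.2 w hw0 hw1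
    (by rw [e1]; exact (div_le_div_iff_of_pos_right hV').mpr hx)
    (by rw [e2]; exact (div_le_div_iff_of_pos_right hV').mpr hy)
  rw [e1] at h1; rw [e2] at h2
  constructor
  · field_simp at h1; linarith
  · field_simp at h2; linarith

lemma sep_mk (hV : 0 < V) (hk : k ∈ Finset.Icc 1 V)
    (h : ∀ w : ℕ → ℝ, (∀ j, 0 ≤ w j) → (∑ j ∈ Finset.Icc 1 V, w j) = 1 →
      ∑ j ∈ Finset.Icc 1 V, w j * (j : ℝ) ≤ (k : ℝ) →
      ∑ j ∈ Finset.Icc 1 V, w j * (1 - S j) ≤ 1 - S k →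
      (∑ j ∈ Finset.Icc 1 V, w j * (j : ℝ)) = (k : ℝ) ∧
      (∑ j ∈ Finset.Icc 1 V, w j * (1 - S j)) = 1 - S k) :
    IsSEP V S k := by
  have hV' : (0:ℝ) < V := by exact_mod_cast hV
  refine ⟨hk, fun w hw0 hw1 hx hy => ?_⟩
  have e1 := sum_div_eq V w (fun j => (j : ℝ))
  have e2 := sum_div_eq V w (fun j => 1 - S j)
  rw [e1] at hx ⊢; rw [e2] at hy ⊢
  obtain ⟨h1, h2⟩ := h w hw0 hw1 ((div_le_div_iff_of_pos_right hV').mp hx) ((div_le_div_iff_of_pos_right hV').mp hy)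
  rw [h1, h2]; exact ⟨rfl, rfl⟩

lemma sep_of_support (hV : 0 < V) (hk : k ∈ Finset.Icc 1 V)
    (m : ℝ) (hm : m < 0)
    (hsupp : ∀ j, 1 ≤ j → j ≤ V → j ≠ k → 0 < S k - S j - m * ((j:ℝ) - k)) :
    IsSEP V S k := by
  apply sep_mk hV hk
  intro w hw0 hw1 hx hy
  set D : ℕ → ℝ := fun j => (1 - S j) - (1 - S k) - m * ((j:ℝ) - k) with hD
  have hterm : ∀ j ∈ Finset.Icc 1 V, w j * (1 - S j)
      = (1 - S k) * w j + m * (w j * (j:ℝ)) - m * (k:ℝ) * w j + w j * D j := by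
    intro j _; simp only [hD]; ring
  have hid : ∑ j ∈ Finset.Icc 1 V, w j * (1 - S j)
      = (1 - S k) + m * ((∑ j ∈ Finset.Icc 1 V, w j * (j:ℝ)) - (k:ℝ))
        + ∑ j ∈ Finset.Icc 1 V, w j * D j := by
    rw [Finset.sum_congr rfl hterm, Finset.sum_add_distrib, Finset.sum_sub_distrib,
      Finset.sum_add_distrib, ← Finset.mul_sum, ← Finset.mul_sum, ← Finset.mul_sum, hw1]
    ring
  have hDnn : 0 ≤ ∑ j ∈ Finset.Icc 1 V, w j * D j := by
    apply Finset.sum_nonneg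
    intro j hj
    rcases eq_or_ne j k with h | h
    · simp [hD, h]
    · exact mul_nonneg (hw0 j)
        (by have := hsupp j (Finset.mem_Icc.mp hj).1 (Finset.mem_Icc.mp hj).2 h
            simp only [hD]; linarith)
  have hmX : 0 ≤ m * ((∑ j ∈ Finset.Icc 1 V, w j * (j:ℝ)) - (k:ℝ)) :=
    mul_nonneg_of_nonpos_of_nonpos (le_of_lt hm)
      (by linarith : (∑ j ∈ Finset.Icc 1 V, w j * (j:ℝ)) - (k:ℝ) ≤ 0)
  have hz : m * ((∑ j ∈ Finset.Icc 1 V, w j * (j:ℝ)) - (k:ℝ)) = 0 := by linarith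
  have hXk : (∑ j ∈ Finset.Icc 1 V, w j * (j:ℝ)) = (k:ℝ) := by
    rcases mul_eq_zero.mp hz with h | h
    · exact absurd h (ne_of_lt hm)
    · linarith
  exact ⟨hXk, by linarith⟩

end SEPlemmas

lemma dec_support (V : ℕ) (s : ℕ → ℝ)
    (hdec : ∀ a b, 1 ≤ a → a < b → b ≤ V → s b < s a)
    (k : ℕ) (hk1 : 1 ≤ k) (hkV : k < V) (j : ℕ) (hj1 : 1 ≤ j) (hjV : j ≤ V)
    (hjk : j ≠ k) :
    0 < cumS s k - cumS s j - (-((s k + s (k+1))/2)) * ((j:ℝ) - k) := by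
  have hss : s (k+1) < s k := hdec k (k+1) hk1 (Nat.lt_succ_self k) hkV
  rcases lt_or_gt_of_ne hjk with hlt | hgt
  · have hdiff := cumS_diff s (le_of_lt hlt)
    have hb := le_sum_Ioc s j k (s k) (fun t ht htk => by
      rcases eq_or_lt_of_le htk with h1 | h1
      · rw [h1]
      · exact le_of_lt (hdec t k (by omega) h1 (le_of_lt hkV)))
    have hc : ((k - j : ℕ) : ℝ) = (k:ℝ) - j := by
      rw [Nat.cast_sub (le_of_lt hlt)]
    rw [hc] at hb
    have hcd : (1:ℝ) ≤ (k:ℝ) - j := by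
      have : (j:ℝ) + 1 ≤ k := by exact_mod_cast hlt
      linarith
    nlinarith [hb, hdiff, mul_le_mul_of_nonneg_right hcd (by linarith : (0:ℝ) ≤ s k - s (k+1))]
  · have hdiff := cumS_diff s (le_of_lt hgt)
    have hb := sum_Ioc_le s k j (s (k+1)) (fun t ht htj => by
      rcases eq_or_lt_of_le (Nat.succ_le_of_lt ht) with h1 | h1
      · rw [← h1]
      · exact le_of_lt (hdec (k+1) t (by omega) h1 (le_trans htj hjV)))
    have hc : ((j - k : ℕ) : ℝ) = (j:ℝ) - k := by
      rw [Nat.cast_sub (le_of_lt hgt)]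
    rw [hc] at hb
    have hcd : (1:ℝ) ≤ (j:ℝ) - k := by
      have : (k:ℝ) + 1 ≤ j := by exact_mod_cast hgt
      linarith
    nlinarith [hb, hdiff, mul_le_mul_of_nonneg_right hcd (by linarith : (0:ℝ) ≤ s k - s (k+1))]

lemma q_step (l : ℕ) (q : ℕ → ℕ) (hmono : ∀ a b, 1 ≤ a → a < b → b ≤ l → q a < q b) :
    ∀ a b, 1 ≤ a → a ≤ b → b ≤ l → q a + (b - a) ≤ q b := by
  intro a b ha hab hbl
  induction b, hab using Nat.le_induction with
  | base => simp
  | succ n hn ih =>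
    have h1 := ih (by omega)
    have h2 := hmono n (n+1) (by omega) (Nat.lt_succ_self n) hbl
    omega

set_option maxHeartbeats 1600000 in
/-- RMoP optimality for average occupancy in the LRUSM.  Let `q 1 = 1 < … < q l = V`
enumerate the `ev_k` that are supported efficient points, and `q i < C' ≤ q (i+1)`
with `C' = γ'·q i + (1-γ')·q (i+1)`, `γ' ∈ (0,1]`.  The randomized mixture applying
`ev_{q i}` with probability `γ'` and `ev_{q (i+1)}` with probability `1-γ'` to every
item has average occupancy `C'` and miss rate
`γ'(1-S(q i)) + (1-γ')(1-S(q (i+1)))`, which is minimal among all policies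
(mixtures `w` of the `ev_k` over the items) with average occupancy `C'`.
Moreover if `s` is monotonically decreasing then `l = V` and `q i = i`, and if `s`
is monotonically increasing then `l = 2`, `q 1 = 1`, `q 2 = V`. -/
theorem stmt19 (V l : ℕ) (hV : 1 ≤ V) (s : ℕ → ℝ)
    (hs : ∀ i, 0 ≤ s i) (hsum : ∑ j ∈ Finset.Icc 1 V, s j = 1)
    (q : ℕ → ℕ) (hl : 1 ≤ l)
    (hmono : ∀ a b, 1 ≤ a → a < b → b ≤ l → q a < q b)
    (hq1 : q 1 = 1) (hql : q l = V)
    (hSEP : ∀ k, IsSEP V (cumS s) k ↔ ∃ i, 1 ≤ i ∧ i ≤ l ∧ q i = k)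
    (i : ℕ) (hi : 1 ≤ i) (hil : i < l)
    (γ' C' : ℝ) (hγ0 : 0 < γ') (hγ1 : γ' ≤ 1)
    (hC' : C' = γ' * (q i : ℝ) + (1 - γ') * (q (i + 1) : ℝ))
    (hC'lo : (q i : ℝ) < C') (hC'hi : C' ≤ (q (i + 1) : ℝ)) :
    (∀ w : ℕ → ℝ, (∀ k, 0 ≤ w k) → (∑ k ∈ Finset.Icc 1 V, w k) = 1 →
      (∑ k ∈ Finset.Icc 1 V, w k * (k : ℝ)) = C' →
      γ' * (1 - cumS s (q i)) + (1 - γ') * (1 - cumS s (q (i + 1)))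
        ≤ ∑ k ∈ Finset.Icc 1 V, w k * (1 - cumS s k))
    ∧ ((∀ a b, 1 ≤ a → a < b → b ≤ V → s b < s a) →
        l = V ∧ ∀ i', 1 ≤ i' → i' ≤ l → q i' = i')
    ∧ ((∀ a b, 1 ≤ a → a < b → b ≤ V → s a < s b) →
        l = 2 ∧ q 1 = 1 ∧ q 2 = V) := by
  have hV0 : 0 < V := hV
  have hVR : (0:ℝ) < V := by exact_mod_cast hV
  refine ⟨?_, ?_, ?_⟩
  · intro w hw0 hw1 hXC
    have sepA : IsSEP V (cumS s) (q i) := (hSEP (q i)).mpr ⟨i, hi, le_of_lt hil, rfl⟩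
    have sepB : IsSEP V (cumS s) (q (i+1)) := (hSEP (q (i+1))).mpr ⟨i+1, by omega, by omega, rfl⟩
    have hmemA := sepA.1
    have hmemB := sepB.1
    have hAB : q i < q (i+1) := hmono i (i+1) hi (Nat.lt_succ_self i) (by omega)
    have habR : ((q i : ℕ) : ℝ) < ((q (i+1) : ℕ) : ℝ) := by exact_mod_cast hAB
    have hyBA : 1 - cumS s (q (i+1)) < 1 - cumS s (q i) := by
      by_contra hcon
      push_neg at hcon
      obtain ⟨h1, _⟩ := sep_apply hV0 sepB (fun j => if j = q i then (1:ℝ) else 0)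
        (fun j => by split_ifs <;> norm_num)
        (by simpa using one_point V (q i) hmemA (fun _ => (1:ℝ)))
        (by rw [one_point V (q i) hmemA]; exact le_of_lt habR)
        (by rw [one_point V (q i) hmemA]; exact hcon)
      rw [one_point V (q i) hmemA] at h1
      exact absurd h1 (ne_of_lt habR)
    obtain ⟨m, hmdef⟩ : ∃ m : ℝ, m = ((1 - cumS s (q (i+1))) - (1 - cumS s (q i))) / ((q (i+1):ℝ) - (q i:ℝ)) :=
      ⟨_, rfl⟩
    have hm : m < 0 := by
      rw [hmdef]
      exact div_neg_of_neg_of_pos (by linarith) (by linarith)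
    have hne0 : ((q (i+1)):ℝ) - (q i:ℝ) ≠ 0 := by linarith
    have hLb : 1 - cumS s (q (i+1)) = (1 - cumS s (q i)) + m * ((q (i+1):ℝ) - (q i:ℝ)) := by
      rw [hmdef, div_mul_cancel₀ _ hne0]
      ring
    have key : ∀ j, 1 ≤ j → j ≤ V →
        (1 - cumS s (q i)) + m * ((j:ℝ) - (q i:ℝ)) ≤ 1 - cumS s j := by
      obtain ⟨j0, hj0mem, hj0min⟩ := Finset.exists_min_image (Finset.Icc 1 V)
        (fun j => (1 - cumS s j) - ((1 - cumS s (q i)) + m * ((j:ℝ) - (q i:ℝ)))) ⟨q i, hmemA⟩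
      obtain ⟨d, hddef⟩ : ∃ d : ℝ, d = (1 - cumS s j0) - ((1 - cumS s (q i)) + m * ((j0:ℝ) - (q i:ℝ))) :=
        ⟨_, rfl⟩
      rw [← hddef] at hj0min
      rcases le_or_gt 0 d with hd | hd
      · intro j hj1 hjV
        have h := hj0min j (Finset.mem_Icc.mpr ⟨hj1, hjV⟩)
        linarith
      · exfalso
        have hyj0 : 1 - cumS s j0 = (1 - cumS s (q i)) + m * ((j0:ℝ) - (q i:ℝ)) + d := by
          rw [hddef]; ring
        have sep0 : IsSEP V (cumS s) j0 := by
          apply sep_mk hV0 hj0mem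
          intro w' hw0' hw1' hx' hy'
          have hterm : ∀ j ∈ Finset.Icc 1 V,
              w' j * (((1 - cumS s (q i)) - m * (q i:ℝ) + d) + m * (j:ℝ))
                ≤ w' j * (1 - cumS s j) := by
            intro j hj
            apply mul_le_mul_of_nonneg_left _ (hw0' j)
            have h := hj0min j hj
            linarith
          have hlb : ((1 - cumS s (q i)) - m * (q i:ℝ) + d)
                + m * (∑ j ∈ Finset.Icc 1 V, w' j * (j:ℝ))
              ≤ ∑ j ∈ Finset.Icc 1 V, w' j * (1 - cumS s j) := by
            rw [← sum_affine V w' hw1' ((1 - cumS s (q i)) - m * (q i:ℝ) + d) m]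
            exact Finset.sum_le_sum hterm
          have hmx : m * (j0:ℝ) ≤ m * (∑ j ∈ Finset.Icc 1 V, w' j * (j:ℝ)) :=
            mul_le_mul_of_nonpos_left hx' (le_of_lt hm)
          have hup : m * (∑ j ∈ Finset.Icc 1 V, w' j * (j:ℝ)) ≤ m * (j0:ℝ) := by
            nlinarith [hlb, hy', hyj0]
          have hXeq : (∑ j ∈ Finset.Icc 1 V, w' j * (j:ℝ)) = (j0:ℝ) :=
            mul_left_cancel₀ (ne_of_lt hm) (le_antisymm hup hmx)
          refine ⟨hXeq, le_antisymm hy' ?_⟩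
          have hms : m * (∑ j ∈ Finset.Icc 1 V, w' j * (j:ℝ)) = m * (j0:ℝ) := by rw [hXeq]
          nlinarith [hlb, hms, hyj0]
        obtain ⟨i'', h1'', h2'', h3''⟩ := (hSEP j0).mp sep0
        have hj0A : j0 ≠ q i := by
          intro h
          rw [h] at hyj0
          simp at hyj0
          linarith
        have hj0B : j0 ≠ q (i+1) := by
          intro h
          rw [h] at hyj0
          rw [hLb] at hyj0
          linarith
        have hne1 : i'' ≠ i := fun h => hj0A (by rw [← h3'', h])
        have hne2 : i'' ≠ i + 1 := fun h => hj0B (by rw [← h3'', h])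
        have hcase : i'' < i ∨ i + 1 < i'' := by omega
        rcases hcase with hlt | hgt
        · -- j0 left of q i : mix j0 with q (i+1) to dominate q i
          have hj0ltA : j0 < q i := by
            have := hmono i'' i h1'' hlt (by omega); omega
          have hj0R : ((j0:ℕ):ℝ) < (q i:ℝ) := by exact_mod_cast hj0ltA
          obtain ⟨tt, httdef⟩ : ∃ tt : ℝ, tt = ((q (i+1):ℝ) - (q i:ℝ)) / ((q (i+1):ℝ) - (j0:ℝ)) :=
            ⟨_, rfl⟩
          have htt0 : 0 < tt := by
            rw [httdef]; exact div_pos (by linarith) (by linarith)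
          have htt1 : tt < 1 := by
            rw [httdef]; exact (div_lt_one (by linarith)).mpr (by linarith)
          have hj0neB : j0 ≠ q (i+1) := hj0B
          obtain ⟨w2, hw2def⟩ : ∃ w2 : ℕ → ℝ, w2 = fun j => if j = j0 then tt
              else if j = q (i+1) then 1 - tt else (0:ℝ) := ⟨_, rfl⟩
          have hw20 : ∀ j, 0 ≤ w2 j := by
            intro j; simp only [hw2def]; split_ifs <;> linarith
          have hw21 : ∑ j ∈ Finset.Icc 1 V, w2 j = 1 := by
            simp only [hw2def]
            simpa using two_point V j0 (q (i+1)) hj0mem hmemB hj0neB tt (1-tt) (fun _ => (1:ℝ))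
          have hneB0 : ((q (i+1)):ℝ) - ((j0:ℕ):ℝ) ≠ 0 := by linarith
          have htv : tt * (((q (i+1)):ℝ) - ((j0:ℕ):ℝ)) = ((q (i+1)):ℝ) - ((q i:ℕ):ℝ) := by
            rw [httdef, div_mul_cancel₀ _ hneB0]
          have hX2v : tt * ((j0:ℕ):ℝ) + (1 - tt) * ((q (i+1):ℕ):ℝ) = (q i:ℝ) := by
            linear_combination -htv
          have hX2 : ∑ j ∈ Finset.Icc 1 V, w2 j * (j:ℝ) = (q i:ℝ) := by
            simp only [hw2def]
            rw [two_point V j0 (q (i+1)) hj0mem hmemB hj0neB tt (1-tt) (fun j => (j:ℝ))]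
            exact hX2v
          have hY2 : ∑ j ∈ Finset.Icc 1 V, w2 j * (1 - cumS s j)
              = tt * (1 - cumS s j0) + (1-tt) * (1 - cumS s (q (i+1))) := by
            simp only [hw2def]
            exact two_point V j0 (q (i+1)) hj0mem hmemB hj0neB tt (1-tt) (fun j => 1 - cumS s j)
          have hY2lt : tt * (1 - cumS s j0) + (1-tt) * (1 - cumS s (q (i+1)))
              < 1 - cumS s (q i) := by
            have e : tt * (1 - cumS s j0) + (1-tt) * (1 - cumS s (q (i+1)))
                = (1 - cumS s (q i)) + tt * d := by
              rw [hyj0, hLb]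
              linear_combination m * hX2v
            rw [e]
            have hneg : tt * d < 0 := mul_neg_of_pos_of_neg htt0 hd
            linarith
          obtain ⟨_, hc2⟩ := sep_apply hV0 sepA w2 hw20 hw21 (le_of_eq hX2)
            (by rw [hY2]; exact le_of_lt hY2lt)
          rw [hY2] at hc2
          linarith
        · -- j0 right of q (i+1) : mix q i with j0 to dominate q (i+1)
          have hj0gtB : q (i+1) < j0 := by
            have := hmono (i+1) i'' (by omega) hgt (by omega); omega
          have hj0R : (q (i+1):ℝ) < ((j0:ℕ):ℝ) := by exact_mod_cast hj0gtB
          obtain ⟨tt, httdef⟩ : ∃ tt : ℝ, tt = ((q (i+1):ℝ) - (q i:ℝ)) / (((j0:ℕ):ℝ) - (q i:ℝ)) :=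
            ⟨_, rfl⟩
          have htt0 : 0 < tt := by
            rw [httdef]; exact div_pos (by linarith) (by linarith)
          have htt1 : tt < 1 := by
            rw [httdef]; exact (div_lt_one (by linarith)).mpr (by linarith)
          have hAnej0 : q i ≠ j0 := fun h => hj0A h.symm
          obtain ⟨w2, hw2def⟩ : ∃ w2 : ℕ → ℝ, w2 = fun j => if j = q i then 1 - tt
              else if j = j0 then tt else (0:ℝ) := ⟨_, rfl⟩
          have hw20 : ∀ j, 0 ≤ w2 j := by
            intro j; simp only [hw2def]; split_ifs <;> linarith
          have hw21 : ∑ j ∈ Finset.Icc 1 V, w2 j = 1 := by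
            simp only [hw2def]
            simpa using two_point V (q i) j0 hmemA hj0mem hAnej0 (1-tt) tt (fun _ => (1:ℝ))
          have hneB0 : ((j0:ℕ):ℝ) - ((q i:ℕ):ℝ) ≠ 0 := by linarith
          have htv : tt * (((j0:ℕ):ℝ) - ((q i:ℕ):ℝ)) = ((q (i+1)):ℝ) - ((q i:ℕ):ℝ) := by
            rw [httdef, div_mul_cancel₀ _ hneB0]
          have hX2v : (1 - tt) * ((q i:ℕ):ℝ) + tt * ((j0:ℕ):ℝ) = (q (i+1):ℝ) := by
            linear_combination htv
          have hX2 : ∑ j ∈ Finset.Icc 1 V, w2 j * (j:ℝ) = (q (i+1):ℝ) := by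
            simp only [hw2def]
            rw [two_point V (q i) j0 hmemA hj0mem hAnej0 (1-tt) tt (fun j => (j:ℝ))]
            exact hX2v
          have hY2 : ∑ j ∈ Finset.Icc 1 V, w2 j * (1 - cumS s j)
              = (1-tt) * (1 - cumS s (q i)) + tt * (1 - cumS s j0) := by
            simp only [hw2def]
            exact two_point V (q i) j0 hmemA hj0mem hAnej0 (1-tt) tt (fun j => 1 - cumS s j)
          have hY2lt : (1-tt) * (1 - cumS s (q i)) + tt * (1 - cumS s j0)
              < 1 - cumS s (q (i+1)) := by
            have e : (1-tt) * (1 - cumS s (q i)) + tt * (1 - cumS s j0)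
                = (1 - cumS s (q (i+1))) + tt * d := by
              rw [hyj0, hLb]
              linear_combination m * hX2v
            rw [e]
            have hneg : tt * d < 0 := mul_neg_of_pos_of_neg htt0 hd
            linarith
          obtain ⟨_, hc2⟩ := sep_apply hV0 sepB w2 hw20 hw21 (le_of_eq hX2)
            (by rw [hY2]; exact le_of_lt hY2lt)
          rw [hY2] at hc2
          linarith
    have lb : ∑ k ∈ Finset.Icc 1 V, w k * (((1 - cumS s (q i)) - m * (q i:ℝ)) + m * (k:ℝ))
        ≤ ∑ k ∈ Finset.Icc 1 V, w k * (1 - cumS s k) := by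
      apply Finset.sum_le_sum
      intro j hj
      apply mul_le_mul_of_nonneg_left _ (hw0 j)
      have h := key j (Finset.mem_Icc.mp hj).1 (Finset.mem_Icc.mp hj).2
      linarith
    rw [sum_affine V w hw1 ((1 - cumS s (q i)) - m * (q i:ℝ)) m, hXC] at lb
    have tgt : γ' * (1 - cumS s (q i)) + (1 - γ') * (1 - cumS s (q (i+1)))
        = ((1 - cumS s (q i)) - m * (q i:ℝ)) + m * C' := by
      linear_combination (1 - γ') * hLb - m * hC'
    linarith [lb]
  -- Part 2: strictly decreasing s
  · intro hdec
    have hsep_all : ∀ k, 1 ≤ k → k ≤ V → ∃ i', 1 ≤ i' ∧ i' ≤ l ∧ q i' = k := by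
      intro k hk1 hkV
      rcases eq_or_lt_of_le hkV with h | h
      · exact ⟨l, hl, le_refl l, by rw [hql, h]⟩
      · refine (hSEP k).mp ?_
        have hss : s (k+1) < s k := hdec k (k+1) hk1 (Nat.lt_succ_self k) h
        have hm : -((s k + s (k+1))/2) < 0 := by
          have := hs (k+1); linarith
        exact sep_of_support hV0 (Finset.mem_Icc.mpr ⟨hk1, hkV⟩) _ hm
          (fun j hj1 hjV hjk => dec_support V s hdec k hk1 h j hj1 hjV hjk)
    have hlV : l ≤ V := by
      have := q_step l q hmono 1 l Nat.le.refl hl (le_refl l)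
      omega
    have hVl : V ≤ l := by
      have hsurj : Set.SurjOn q ↑(Finset.Icc 1 l) ↑(Finset.Icc 1 V) := by
        intro k hk
        simp only [Finset.coe_Icc, Set.mem_Icc] at hk
        obtain ⟨i', h1, h2, h3⟩ := hsep_all k hk.1 hk.2
        exact ⟨i', by simp only [Finset.coe_Icc, Set.mem_Icc]; exact ⟨h1, h2⟩, h3⟩
      have := Finset.card_le_card_of_surjOn q hsurj
      simpa [Nat.card_Icc] using this
    have hlVeq : l = V := le_antisymm hlV hVl
    refine ⟨hlVeq, fun i' h1 h2 => ?_⟩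
    have hup := q_step l q hmono 1 i' Nat.le.refl h1 h2
    have hdn := q_step l q hmono i' l h1 h2 (le_refl l)
    omega
  -- Part 3: strictly increasing s
  · intro hinc
    have hl2 : 2 ≤ l := by omega
    have hV2 : 2 ≤ V := by
      have := hmono 1 l Nat.le.refl (by omega) (le_refl l)
      omega
    have hlle : l ≤ 2 := by
      by_contra hcon
      have h3 : 3 ≤ l := by omega
      set k := q 2 with hk
      have hk1 : 1 < k := by
        have := hmono 1 2 Nat.le.refl Nat.le.refl (by omega)
        omega
      have hkV : k < V := by
        have := hmono 2 l (by omega) (by omega) (le_refl l)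
        omega
      have sepk : IsSEP V (cumS s) k := (hSEP k).mpr ⟨2, by omega, by omega, rfl⟩
      have hkR1 : (1:ℝ) < (k:ℝ) := by exact_mod_cast hk1
      have hkRV : (k:ℝ) < (V:ℝ) := by exact_mod_cast hkV
      have hV1R : (0:ℝ) < (V:ℝ) - 1 := by linarith
      set t : ℝ := ((V:ℝ) - k)/((V:ℝ) - 1) with ht
      have ht0 : 0 < t := div_pos (by linarith) hV1R
      have ht1 : t < 1 := (div_lt_one hV1R).mpr (by linarith)
      have hm1 : (1:ℕ) ∈ Finset.Icc 1 V := Finset.mem_Icc.mpr ⟨le_refl 1, hV⟩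
      have hmV : V ∈ Finset.Icc 1 V := Finset.mem_Icc.mpr ⟨hV, le_refl V⟩
      have h1V : (1:ℕ) ≠ V := by omega
      set w : ℕ → ℝ := fun j => if j = 1 then t else if j = V then 1 - t else 0 with hw
      have hw0 : ∀ j, 0 ≤ w j := by
        intro j; simp only [hw]; split_ifs <;> linarith
      have hw1 : ∑ j ∈ Finset.Icc 1 V, w j = 1 := by
        have := two_point V 1 V hm1 hmV h1V t (1-t) (fun _ => (1:ℝ))
        simpa [hw] using this
      have hX : ∑ j ∈ Finset.Icc 1 V, w j * (j:ℝ) = (k:ℝ) := by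
        have := two_point V 1 V hm1 hmV h1V t (1-t) (fun j => (j:ℝ))
        simp only [hw]
        rw [this, ht]
        field_simp
        ring
      have hY : ∑ j ∈ Finset.Icc 1 V, w j * (1 - cumS s j)
          = t * (1 - cumS s 1) + (1-t) * (1 - cumS s V) :=
        two_point V 1 V hm1 hmV h1V t (1-t) (fun j => 1 - cumS s j)
      -- strict concavity bound
      have hb1 : cumS s k - cumS s 1 ≤ ((k:ℝ) - 1) * s k := by
        have := sum_Ioc_le s 1 k (s k) (fun u hu huk => by
          rcases eq_or_lt_of_le huk with h' | h'
          · rw [h']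
          · exact le_of_lt (hinc u k (by omega) h' (le_of_lt hkV)))
        rw [cumS_diff s (by omega : 1 ≤ k)]
        rwa [Nat.cast_sub (by omega : 1 ≤ k), Nat.cast_one] at this
      have hb2 : ((V:ℝ) - k) * s (k+1) ≤ cumS s V - cumS s k := by
        have := le_sum_Ioc s k V (s (k+1)) (fun u hu huV => by
          rcases eq_or_lt_of_le (Nat.succ_le_of_lt hu) with h' | h'
          · rw [← h']
          · exact le_of_lt (hinc (k+1) u (by omega) h' huV))
        rw [cumS_diff s (le_of_lt hkV)]
        rwa [Nat.cast_sub (le_of_lt hkV)] at this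
      have hss : s k < s (k+1) := hinc k (k+1) (by omega) (Nat.lt_succ_self k) hkV
      have key2 : ((V:ℝ) - k) * (cumS s k - cumS s 1) < ((k:ℝ) - 1) * (cumS s V - cumS s k) := by
        nlinarith [mul_le_mul_of_nonneg_left hb1 (by linarith : (0:ℝ) ≤ (V:ℝ) - k),
          mul_le_mul_of_nonneg_left hb2 (by linarith : (0:ℝ) ≤ (k:ℝ) - 1),
          mul_pos (mul_pos (by linarith : (0:ℝ) < (V:ℝ) - k) (by linarith : (0:ℝ) < (k:ℝ) - 1))
            (by linarith : (0:ℝ) < s (k+1) - s k)]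
      have hYlt : t * (1 - cumS s 1) + (1-t) * (1 - cumS s V) < 1 - cumS s k := by
        have e : t * (1 - cumS s 1) + (1-t) * (1 - cumS s V)
            = (((V:ℝ)-k) * (1 - cumS s 1) + ((k:ℝ)-1) * (1 - cumS s V))/((V:ℝ)-1) := by
          rw [ht]; field_simp; ring
        rw [e, div_lt_iff₀ hV1R]
        nlinarith [key2]
      obtain ⟨_, hcontr⟩ := sep_apply hV0 sepk w hw0 hw1 (le_of_eq hX)
        (by rw [hY]; exact le_of_lt hYlt)
      rw [hY] at hcontr
      linarith
    have hleq : l = 2 := le_antisymm hlle hl2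
    exact ⟨hleq, hq1, by rw [← hleq, hql]⟩
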